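/- arXiv:1308.0218 — 2 statements merged into one kernel-verified Lean document; each statement's English description precedes it below -/
import Mathlib

section
/- Let A be a unital ring, let F be a finitely generated projective full A-module, and let E and E' be finitely generated projective A-modules. Then E and E' are stably isomorphic (i.e., there exists a finitely generated projective A-module G with E ⊕ G ≅ E' ⊕ G) if and only if there exists k ∈ ℕ such that E ⊕ F^k ≅ E' ⊕ F^k. -/
universe u v

section Aux

variable (A : Type u) [Ring A]

theorem aux_projPi (F : Type v) [AddCommGroup F] [Module A F] [Module.Projective A F] (k : ℕ) :
    Module.Projective A (Fin k → F) := by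
  induction k with
  | zero =>
    have : Subsingleton (Fin 0 → F) := ⟨fun a b => funext fun i => i.elim0⟩
    infer_instance
  | succ k ih =>
    have e : (Fin (k + 1) → F) ≃ₗ[A] F × (Fin k → F) :=
      (LinearEquiv.funCongrLeft A F (finSuccEquiv k).symm).trans
        (LinearEquiv.piOptionEquivProd A)
    exact Module.Projective.of_equiv e.symm

set_option linter.unnecessarySeqFocus false in
noncomputable def auxSplitEquiv {M N : Type*} [AddCommGroup M] [Module A M] [AddCommGroup N]
    [Module A N] (f : M →ₗ[A] N) (σ : N →ₗ[A] M) (h : f.comp σ = LinearMap.id) :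
    M ≃ₗ[A] N × LinearMap.ker f :=
  have h' : ∀ y, f (σ y) = y := fun y => congrArg (· y) (congrArg DFunLike.coe h)
  { toFun := fun x => (f x, ⟨x - σ (f x), by simp [LinearMap.mem_ker, h']⟩)
    invFun := fun p => σ p.1 + p.2.1
    map_add' := by intro x y; ext <;> simp <;> abel
    map_smul' := by intro a x; ext <;> simp [smul_sub]
    left_inv := fun x => by simp
    right_inv := fun p => by
      ext <;> simp [h', LinearMap.mem_ker.mp p.2.2] }

def auxProdPiEquiv (ι : Type*) (M N : Type*) [AddCommGroup M] [Module A M] [AddCommGroup N]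
    [Module A N] : (ι → M × N) ≃ₗ[A] (ι → M) × (ι → N) where
  toFun f := (fun i => (f i).1, fun i => (f i).2)
  invFun p i := (p.1 i, p.2 i)
  map_add' _ _ := rfl
  map_smul' _ _ := rfl
  left_inv _ := rfl
  right_inv _ := rfl

def auxCurryEquiv (α β : Type*) (M : Type*) [AddCommGroup M] [Module A M] :
    (α × β → M) ≃ₗ[A] (α → β → M) where
  toFun f a b := f (a, b)
  invFun f p := f p.1 p.2
  map_add' _ _ := rfl
  map_smul' _ _ := rfl
  left_inv _ := rfl
  right_inv _ := rfl

end Aux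

/-- An `A`-module `F` is *full* if the span of `{ℓ x : x ∈ F, ℓ ∈ Hom_A(F, A)}` is all of `A`. -/
def IsFullModule (A : Type u) [Ring A] (F : Type v) [AddCommGroup F] [Module A F] : Prop :=
  Submodule.span A {y : A | ∃ (ℓ : F →ₗ[A] A) (x : F), ℓ x = y} = ⊤

theorem IsFullModule.exists_surj (A : Type u) [Ring A] (F : Type v) [AddCommGroup F] [Module A F]
    (hF : IsFullModule A F) :
    ∃ (m : ℕ) (Φ : (Fin m → F) →ₗ[A] A), Function.Surjective Φ := by
  have h1 : (1 : A) ∈ Submodule.span A {y : A | ∃ (ℓ : F →ₗ[A] A) (x : F), ℓ x = y} := by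
    rw [hF]; trivial
  rw [Submodule.mem_span_set'] at h1
  obtain ⟨m, c, g, hg⟩ := h1
  choose ℓ x hx using fun i => (g i).2
  refine ⟨m, (∑ i, (ℓ i).comp (LinearMap.proj i)), fun a => ?_⟩
  refine ⟨fun i => a • c i • x i, ?_⟩
  simp only [LinearMap.coe_sum, Finset.sum_apply, LinearMap.coe_comp, Function.comp_apply,
    LinearMap.proj_apply, map_smul, smul_eq_mul]
  calc ∑ i, a * (c i * (ℓ i) (x i)) = a * ∑ i, c i * (ℓ i) (x i) := by
        rw [Finset.mul_sum]
    _ = a := by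
        simp only [hx]
        have := hg
        simp only [smul_eq_mul] at this
        rw [this, mul_one]

/-- Let `A` be a unital ring, `F` a finitely generated projective full `A`-module, and `E`, `E'`
finitely generated projective `A`-modules.  Then `E` and `E'` are stably isomorphic iff there is
`k ∈ ℕ` with `E ⊕ F^k ≅ E' ⊕ F^k`. -/
theorem stablyIsomorphic_iff_exists_full_stabilization
    (A : Type u) [Ring A]
    (F : Type v) [AddCommGroup F] [Module A F]
    [Module.Finite A F] [Module.Projective A F] (hF : IsFullModule A F)
    (E : Type v) [AddCommGroup E] [Module A E] [Module.Finite A E] [Module.Projective A E]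
    (E' : Type v) [AddCommGroup E'] [Module A E'] [Module.Finite A E'] [Module.Projective A E'] :
    (∃ (G : Type v) (_ : AddCommGroup G) (_ : Module A G),
        Module.Finite A G ∧ Module.Projective A G ∧ Nonempty ((E × G) ≃ₗ[A] (E' × G)))
      ↔ ∃ k : ℕ, Nonempty ((E × (Fin k → F)) ≃ₗ[A] (E' × (Fin k → F))) := by
  constructor
  · rintro ⟨G, _, _, hGfin, hGproj, ⟨e⟩⟩
    obtain ⟨m, Φ, hΦ⟩ := hF.exists_surj
    obtain ⟨σΦ, hσΦ⟩ := Module.projective_lifting_property Φ LinearMap.id hΦ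
    let eF : (Fin m → F) ≃ₗ[A] A × LinearMap.ker Φ := auxSplitEquiv A Φ σΦ hσΦ
    obtain ⟨n, f, hf⟩ := Module.Finite.exists_fin' A G
    obtain ⟨σG, hσG⟩ := Module.projective_lifting_property f LinearMap.id hf
    let eG : (Fin n → A) ≃ₗ[A] G × LinearMap.ker f := auxSplitEquiv A f σG hσG
    -- F^(n*m) ≅ A^n × K^n
    let e1 : (Fin (n * m) → F) ≃ₗ[A] (Fin n → A) × (Fin n → LinearMap.ker Φ) :=
      (LinearEquiv.funCongrLeft A F finProdFinEquiv).trans <|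
        (auxCurryEquiv A (Fin n) (Fin m) F).trans <|
          (LinearEquiv.piCongrRight fun _ => eF).trans
            (auxProdPiEquiv A (Fin n) A (LinearMap.ker Φ))
    -- E × A^n ≅ E' × A^n
    let e2 : (E × (Fin n → A)) ≃ₗ[A] (E' × (Fin n → A)) :=
      ((LinearEquiv.refl A E).prodCongr eG).trans <|
        (LinearEquiv.prodAssoc A E G (LinearMap.ker f)).symm.trans <|
          (e.prodCongr (LinearEquiv.refl A (LinearMap.ker f))).trans <|
            (LinearEquiv.prodAssoc A E' G (LinearMap.ker f)).trans
              ((LinearEquiv.refl A E').prodCongr eG.symm)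
    refine ⟨n * m, ⟨?_⟩⟩
    exact ((LinearEquiv.refl A E).prodCongr e1).trans <|
      (LinearEquiv.prodAssoc A E (Fin n → A) (Fin n → LinearMap.ker Φ)).symm.trans <|
        (e2.prodCongr (LinearEquiv.refl A (Fin n → LinearMap.ker Φ))).trans <|
          (LinearEquiv.prodAssoc A E' (Fin n → A) (Fin n → LinearMap.ker Φ)).trans
            ((LinearEquiv.refl A E').prodCongr e1.symm)
  · rintro ⟨k, ⟨e⟩⟩
    exact ⟨Fin k → F, inferInstance, inferInstance, inferInstance, aux_projPi A F k, ⟨e⟩⟩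
end

section
/- Let A be a ring and let M₁, M₂ be A-modules. Suppose there exists k ∈ ℕ such that M₁^k ⊕ M₁ ≅ M₁^k ⊕ M₂ and M₁ ⊕ M₂^k ≅ M₂ ⊕ M₂^k. Then M₁^{2k} ≅ M₂^{2k}. (The key intermediate step is that M₁^{a+1} ⊕ M₂^b ≅ M₁^a ⊕ M₂^{b+1} as soon as a ≥ k or b ≥ k.) -/
universe u v

section aux

variable (A : Type u) [Ring A] (M : Type v) [AddCommGroup M] [Module A M]

/-- `M^(n+1) ≅ M × M^n` as `A`-modules. -/
def succPow (n : ℕ) : (Fin (n + 1) → M) ≃ₗ[A] M × (Fin n → M) :=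
  { (Fin.consEquiv (fun _ : Fin (n + 1) => M)).symm with
    map_add' := fun _ _ => rfl
    map_smul' := fun _ _ => rfl }

/-- Split `M^(m+n)` as `M^m × M^n`. -/
noncomputable def splitPow (m n : ℕ) :
    (Fin (m + n) → M) ≃ₗ[A] (Fin m → M) × (Fin n → M) :=
  (LinearEquiv.piCongrLeft A (fun _ => M) finSumFinEquiv).symm.trans
    (LinearEquiv.sumArrowLequivProdArrow _ _ A M)

variable (N : Type v) [AddCommGroup N] [Module A N]

/-- `M^0 ≅ N^0`. -/
def zeroPowEquiv : (Fin 0 → M) ≃ₗ[A] (Fin 0 → N) :=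
  { Equiv.ofUnique (Fin 0 → M) (Fin 0 → N) with
    map_add' := fun _ _ => Subsingleton.elim _ _
    map_smul' := fun _ _ => Subsingleton.elim _ _ }

end aux

/-- Let `A` be a ring and `M₁`, `M₂` two `A`-modules.  If for some `k ∈ ℕ` one has
`M₁^k ⊕ M₁ ≅ M₁^k ⊕ M₂` and `M₁ ⊕ M₂^k ≅ M₂ ⊕ M₂^k`, then `M₁^(2k) ≅ M₂^(2k)`. -/
theorem power_isomorphic_of_cancellation
    (A : Type u) [Ring A]
    (M₁ : Type v) [AddCommGroup M₁] [Module A M₁]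
    (M₂ : Type v) [AddCommGroup M₂] [Module A M₂]
    (k : ℕ)
    (h₁ : Nonempty (((Fin k → M₁) × M₁) ≃ₗ[A] ((Fin k → M₁) × M₂)))
    (h₂ : Nonempty ((M₁ × (Fin k → M₂)) ≃ₗ[A] (M₂ × (Fin k → M₂)))) :
    Nonempty ((Fin (2 * k) → M₁) ≃ₗ[A] (Fin (2 * k) → M₂)) := by
  obtain ⟨e₁⟩ := h₁
  obtain ⟨e₂⟩ := h₂
  -- Step 1: for all j, M₁^k × M₁^j ≅ M₁^k × M₂^j
  have step1 : ∀ j, Nonempty (((Fin k → M₁) × (Fin j → M₁)) ≃ₗ[A]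
      ((Fin k → M₁) × (Fin j → M₂))) := by
    intro j
    induction j with
    | zero =>
      exact ⟨LinearEquiv.prodCongr (LinearEquiv.refl A _) (zeroPowEquiv A M₁ M₂)⟩
    | succ n ih =>
      obtain ⟨e⟩ := ih
      exact ⟨LinearEquiv.prodCongr (LinearEquiv.refl A _) (succPow A M₁ n) ≪≫ₗ
        (LinearEquiv.prodAssoc A _ _ _).symm ≪≫ₗ
        LinearEquiv.prodCongr e₁ (LinearEquiv.refl A _) ≪≫ₗ
        LinearEquiv.prodCongr (LinearEquiv.prodComm A _ _) (LinearEquiv.refl A _) ≪≫ₗ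
        LinearEquiv.prodAssoc A _ _ _ ≪≫ₗ
        LinearEquiv.prodCongr (LinearEquiv.refl A _) e ≪≫ₗ
        (LinearEquiv.prodAssoc A _ _ _).symm ≪≫ₗ
        LinearEquiv.prodCongr (LinearEquiv.prodComm A _ _) (LinearEquiv.refl A _) ≪≫ₗ
        LinearEquiv.prodAssoc A _ _ _ ≪≫ₗ
        LinearEquiv.prodCongr (LinearEquiv.refl A _) (succPow A M₂ n).symm⟩
  -- Step 2: for all j, M₁^j × M₂^k ≅ M₂^j × M₂^k
  have step2 : ∀ j, Nonempty (((Fin j → M₁) × (Fin k → M₂)) ≃ₗ[A]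
      ((Fin j → M₂) × (Fin k → M₂))) := by
    intro j
    induction j with
    | zero =>
      exact ⟨LinearEquiv.prodCongr (zeroPowEquiv A M₁ M₂) (LinearEquiv.refl A _)⟩
    | succ n ih =>
      obtain ⟨e⟩ := ih
      exact ⟨LinearEquiv.prodCongr (succPow A M₁ n) (LinearEquiv.refl A _) ≪≫ₗ
        LinearEquiv.prodCongr (LinearEquiv.prodComm A _ _) (LinearEquiv.refl A _) ≪≫ₗ
        LinearEquiv.prodAssoc A _ _ _ ≪≫ₗ
        LinearEquiv.prodCongr (LinearEquiv.refl A _) e₂ ≪≫ₗ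
        (LinearEquiv.prodAssoc A _ _ _).symm ≪≫ₗ
        LinearEquiv.prodCongr (LinearEquiv.prodComm A _ _) (LinearEquiv.refl A _) ≪≫ₗ
        LinearEquiv.prodAssoc A _ _ _ ≪≫ₗ
        LinearEquiv.prodCongr (LinearEquiv.refl A _) e ≪≫ₗ
        (LinearEquiv.prodAssoc A _ _ _).symm ≪≫ₗ
        LinearEquiv.prodCongr (succPow A M₂ n).symm (LinearEquiv.refl A _)⟩
  obtain ⟨f₁⟩ := step1 k
  obtain ⟨f₂⟩ := step2 k
  have h2k : 2 * k = k + k := two_mul k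
  exact ⟨LinearEquiv.piCongrLeft A (fun _ => M₁) (finCongr h2k) ≪≫ₗ
    splitPow A M₁ k k ≪≫ₗ f₁ ≪≫ₗ f₂ ≪≫ₗ (splitPow A M₂ k k).symm ≪≫ₗ
    LinearEquiv.piCongrLeft A (fun _ => M₂) (finCongr h2k.symm)⟩
end
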